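/- Let D be a diagram with n boxes that is free of a strictly upper-right configuration, and let T be a standard tableau on the reflected diagram Dˣ. Then for i ∈ [n-1], the entry i is strictly above and strictly to the left of i+1 in T if and only if, in the poset P_{Tˣ}, the pair (i, i+1) is comparable (with i below i+1) but not a covering pair. -/
import Mathlib


/-- A poset with ground set `Fin n` (`[n]`, 0-indexed). -/
structure FinPoset (n : ℕ) where
  le : Fin n → Fin n → Prop
  refl : ∀ a, le a a
  trans : ∀ a b c, le a b → le b c → le a c
  antisymm : ∀ a b, le a b → le b a → a = b

/-- `Σ_L(P)`: the permutations `σ` with `σ(i) ≤ σ(j)` whenever `i ≼_P j`. -/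
def SigmaL {n : ℕ} (P : FinPoset n) : Set (Equiv.Perm (Fin n)) :=
  {σ | ∀ i j : Fin n, P.le i j → σ i ≤ σ j}

/-- `P` is regular: whenever `x ≼_P z` and `y` lies strictly between `x` and `z` in the
integer order, `x ≼_P y` or `y ≼_P z`. -/
def Regular {n : ℕ} (P : FinPoset n) : Prop :=
  ∀ x y z : Fin n, P.le x z → ((x < y ∧ y < z) ∨ (z < y ∧ y < x)) →
    P.le x y ∨ P.le y z

/-- The poset `σ · P`, obtained by relabelling: `i ≼ j` iff `σ⁻¹(i) ≼_P σ⁻¹(j)`. -/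
def permPoset {n : ℕ} (σ : Equiv.Perm (Fin n)) (P : FinPoset n) : FinPoset n where
  le i j := P.le (σ⁻¹ i) (σ⁻¹ j)
  refl _ := P.refl _
  trans _ _ _ h1 h2 := P.trans _ _ _ h1 h2
  antisymm _ _ h1 h2 := σ⁻¹.injective (P.antisymm _ _ h1 h2)

/-- `b` covers `a` in `P`. -/
def Covers {n : ℕ} (P : FinPoset n) (a b : Fin n) : Prop :=
  a ≠ b ∧ P.le a b ∧ ¬ ∃ c, c ≠ a ∧ c ≠ b ∧ P.le a c ∧ P.le c b

/-- `a` and `b` are comparable in `P`. -/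
def Cmp {n : ℕ} (P : FinPoset n) (a b : Fin n) : Prop :=
  P.le a b ∨ P.le b a

/-- A diagram `D ⊆ ℕ²` contains a *strictly upper-right pair* if it has boxes `p, q` with
`p.1 < q.1`, `p.2 < q.2`, and no other box of `D` inside the smallest rectangle
containing `p` and `q`. -/
def HasSUR (D : Set (ℕ × ℕ)) : Prop :=
  ∃ p ∈ D, ∃ q ∈ D, p.1 < q.1 ∧ p.2 < q.2 ∧
    ∀ r ∈ D, (p.1 ≤ r.1 ∧ r.1 ≤ q.1 ∧ p.2 ≤ r.2 ∧ r.2 ≤ q.2) → r = p ∨ r = q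

/-- The poset `P_{Tˣ}` of the reflected filling: `a ≼ b` iff the box of `a` is weakly
left of the box of `b` and weakly below it *after reflecting across the x-axis*,
i.e. `x_a ≤ x_b` and `y_b ≤ y_a` in the original coordinates of `T`. -/
def reflPoset (n : ℕ) (pos : Fin n → ℕ × ℕ) (hinj : Function.Injective pos) :
    FinPoset n where
  le a b := (pos a).1 ≤ (pos b).1 ∧ (pos b).2 ≤ (pos a).2
  refl a := ⟨le_refl _, le_refl _⟩
  trans a b c h1 h2 := ⟨h1.1.trans h2.1, h2.2.trans h1.2⟩
  antisymm a b h1 h2 := hinj (Prod.ext (le_antisymm h1.1 h2.1) (le_antisymm h2.2 h1.2))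

/-- Let `D` be a diagram with `n` boxes free of a strictly upper-right
configuration and `T` a standard tableau on the reflected diagram `Dˣ`, recorded by the
position map `pos` of its entries (0-indexed). Then for `i ∈ [n-1]`, the entry `i` is
strictly above and strictly to the left of `i+1` in `T` iff, in the poset `P_{Tˣ}`,
the pair `(i, i+1)` is comparable with `i` below `i+1` but is not a covering pair. -/
theorem stmt14 (n : ℕ) (pos : Fin n → ℕ × ℕ) (hinj : Function.Injective pos)
    (hstd : ∀ a b : Fin n, (pos a).1 ≤ (pos b).1 → (pos a).2 ≤ (pos b).2 → a ≤ b)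
    (M : ℕ) (hM : ∀ k, (pos k).2 ≤ M)
    (D : Set (ℕ × ℕ)) (hD : D = (fun q => (q.1, M - q.2)) '' Set.range pos)
    (hfree : ¬ HasSUR D)
    (i : ℕ) (h : i + 1 < n) :
    ((pos ⟨i, Nat.lt_of_succ_lt h⟩).1 < (pos ⟨i + 1, h⟩).1 ∧
        (pos ⟨i + 1, h⟩).2 < (pos ⟨i, Nat.lt_of_succ_lt h⟩).2) ↔
      ((reflPoset n pos hinj).le ⟨i, Nat.lt_of_succ_lt h⟩ ⟨i + 1, h⟩ ∧
        ¬ Covers (reflPoset n pos hinj) ⟨i, Nat.lt_of_succ_lt h⟩ ⟨i + 1, h⟩) := by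
  set ia : Fin n := ⟨i, Nat.lt_of_succ_lt h⟩ with hia
  set ib : Fin n := ⟨i + 1, h⟩ with hib
  constructor
  · rintro ⟨hx, hy⟩
    refine ⟨⟨le_of_lt hx, le_of_lt hy⟩, ?_⟩
    rintro ⟨-, -, hnc⟩
    apply hnc
    unfold HasSUR at hfree
    push_neg at hfree
    have hpA : ((pos ia).1, M - (pos ia).2) ∈ D := by
      rw [hD]; exact ⟨pos ia, ⟨ia, rfl⟩, rfl⟩
    have hpB : ((pos ib).1, M - (pos ib).2) ∈ D := by
      rw [hD]; exact ⟨pos ib, ⟨ib, rfl⟩, rfl⟩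
    have hy2 : M - (pos ia).2 < M - (pos ib).2 := by
      have := hM ia; omega
    obtain ⟨r, hrD, hrect, hrp, hrq⟩ := hfree _ hpA _ hpB hx hy2
    rw [hD] at hrD
    obtain ⟨q, ⟨k, rfl⟩, rfl⟩ := hrD
    simp only at hrect hrp hrq
    have hk1 : (pos k).2 ≤ (pos ia).2 := by have := hM k; have := hM ia; omega
    have hk2 : (pos ib).2 ≤ (pos k).2 := by have := hM k; have := hM ib; omega
    refine ⟨k, ?_, ?_, ⟨hrect.1, hk1⟩, ⟨hrect.2.1, hk2⟩⟩
    · rintro rfl; exact hrp rfl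
    · rintro rfl; exact hrq rfl
  · rintro ⟨⟨hx, hy⟩, hnc⟩
    have hne : ia ≠ ib := by
      intro hh
      have := congrArg Fin.val hh
      simp [hia, hib] at this
    rw [Covers] at hnc
    push_neg at hnc
    obtain ⟨c, hca, hcb, ⟨h1, h2⟩, ⟨h3, h4⟩⟩ := hnc hne ⟨hx, hy⟩
    constructor
    · rcases lt_or_eq_of_le hx with h' | h'
      · exact h'
      · exfalso
        have e1 : (pos c).1 = (pos ia).1 := by omega
        have e2 : (pos c).1 = (pos ib).1 := by omega
        have hle1 : c ≤ ia := hstd c ia (le_of_eq e1) h2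
        have hle2 : ib ≤ c := hstd ib c (le_of_eq e2.symm) h4
        have : (ib : Fin n).val ≤ (ia : Fin n).val := le_trans hle2 hle1
        simp [hia, hib] at this
    · rcases lt_or_eq_of_le hy with h' | h'
      · exact h'
      · exfalso
        have e1 : (pos c).2 = (pos ia).2 := by omega
        have e2 : (pos c).2 = (pos ib).2 := by omega
        have hle1 : ia ≤ c := hstd ia c h1 (le_of_eq e1.symm)
        have hle2 : c ≤ ib := hstd c ib h3 (le_of_eq e2)
        have v1 : (ia : Fin n).val ≤ c.val := hle1
        have v2 : c.val ≤ (ib : Fin n).val := hle2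
        have vne1 : c.val ≠ (ia : Fin n).val := fun hh => hca (Fin.ext hh)
        have vne2 : c.val ≠ (ib : Fin n).val := fun hh => hcb (Fin.ext hh)
        simp [hia, hib] at v1 v2 vne1 vne2
        omega
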